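/- Let m ≥ 1 and let ∞ > t₁ ≥ t₂ ≥ ⋯ ≥ t_m ≥ 0 be real numbers. Then the iterated integral ∫_{t₂}^{t₁} ds₁ ∫_{t₃}^{t₂} ds₂ ⋯ ∫_{0}^{t_m} ds_m ∏_{k=1}^{m} e^{−s_k²/2} · ∏_{1≤j<k≤m} (s_j² − s_k²) equals the determinant of the m×m matrix N defined, with τ_j := t_{m+1−j} for j = 1,…,m (so the columns correspond to t_m, t_{m−1}, …, t₁ in this order), by N_{ij} = e^{−τ_j²/2} τ_j^{2i−1} for 1 ≤ i ≤ m−1, and N_{m,j} = ∫_0^{τ_j} e^{−ξ²/2} dξ. -/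

import Mathlib

open MeasureTheory

section GaussAux
open Finset Matrix

noncomputable def gaussMom (i : ℕ) (x : ℝ) : ℝ := Real.exp (-x ^ 2 / 2) * x ^ (2 * i)

lemma gaussMom_continuous (i : ℕ) : Continuous (gaussMom i) := by
  unfold gaussMom; fun_prop

noncomputable def gaussG (i : ℕ) (τ : ℝ) : ℝ := ∫ ξ in (0:ℝ)..τ, gaussMom i ξ

lemma gaussG_zero (i : ℕ) : gaussG i 0 = 0 := intervalIntegral.integral_same

lemma gaussMom_intervalIntegrable (i : ℕ) (a b : ℝ) :
    IntervalIntegrable (gaussMom i) volume a b :=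
  (gaussMom_continuous i).intervalIntegrable a b

lemma integral_Ioo_gaussMom (i : ℕ) {α β : ℝ} (h : α ≤ β) :
    ∫ x in Set.Ioo α β, gaussMom i x = gaussG i β - gaussG i α := by
  rw [← MeasureTheory.integral_Ioc_eq_integral_Ioo, ← intervalIntegral.integral_of_le h,
    gaussG, gaussG, intervalIntegral.integral_interval_sub_left
      (gaussMom_intervalIntegrable i 0 β) (gaussMom_intervalIntegrable i 0 α)]

lemma gaussG_succ (i : ℕ) (τ : ℝ) :
    Real.exp (-τ ^ 2 / 2) * τ ^ (2 * i + 1) = (2 * i + 1 : ℝ) * gaussG i τ - gaussG (i + 1) τ := by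
  have hphi : ∀ x : ℝ, HasDerivAt (fun y : ℝ => Real.exp (-y ^ 2 / 2) * y ^ (2 * i + 1))
      ((2 * i + 1 : ℝ) * gaussMom i x - gaussMom (i + 1) x) x := by
    intro x
    have h1 : HasDerivAt (fun y : ℝ => -y ^ 2 / 2) (-x) x := by
      have h := ((hasDerivAt_pow 2 x).neg.div_const 2)
      refine h.congr_deriv ?_
      push_cast
      ring
    have h2 := h1.exp
    have h3 := hasDerivAt_pow (2 * i + 1) x
    have h4 := h2.mul h3
    refine h4.congr_deriv ?_
    have hx : x ^ (2 * (i + 1)) = x ^ (2 * i + 1) * x := by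
      rw [← pow_succ]
      ring_nf
    unfold gaussMom
    simp only [Nat.add_sub_cancel, hx]
    push_cast
    ring
  have hcont : Continuous fun x : ℝ => (2 * i + 1 : ℝ) * gaussMom i x - gaussMom (i + 1) x := by
    have := gaussMom_continuous i
    have := gaussMom_continuous (i + 1)
    fun_prop
  have key := intervalIntegral.integral_eq_sub_of_hasDerivAt
      (f := fun y : ℝ => Real.exp (-y ^ 2 / 2) * y ^ (2 * i + 1))
      (a := 0) (b := τ) (fun x _ => hphi x) (hcont.intervalIntegrable 0 τ)
  rw [intervalIntegral.integral_sub ((gaussMom_intervalIntegrable i 0 τ).const_mul _)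
      (gaussMom_intervalIntegrable (i + 1) 0 τ),
    intervalIntegral.integral_const_mul] at key
  rw [← gaussG, ← gaussG] at key
  rw [key]
  norm_num

lemma indicator_pi_prod {m : ℕ} (s : Fin m → Set ℝ) (f : Fin m → ℝ → ℝ) :
    (Set.pi Set.univ s).indicator (fun u => ∏ j, f j (u j))
      = fun u => ∏ j, (s j).indicator (f j) (u j) := by
  funext u
  by_cases h : u ∈ Set.pi Set.univ s
  · rw [Set.indicator_of_mem h]
    exact Finset.prod_congr rfl fun j _ =>
      (Set.indicator_of_mem (h j (Set.mem_univ j)) _).symm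
  · rw [Set.indicator_of_notMem h]
    rw [Set.mem_univ_pi] at h
    push_neg at h
    obtain ⟨j, hj⟩ := h
    exact (Finset.prod_eq_zero (Finset.mem_univ j)
      (by rw [Set.indicator_of_notMem hj])).symm

lemma box_prod {m : ℕ} (s : Fin m → Set ℝ) (hs : ∀ j, MeasurableSet (s j))
    (f : Fin m → ℝ → ℝ) :
    ∫ u in Set.pi Set.univ s, ∏ j, f j (u j) = ∏ j, ∫ x in s j, f j x := by
  rw [← integral_indicator (MeasurableSet.univ_pi hs), indicator_pi_prod,
    MeasureTheory.integral_fintype_prod_volume_eq_prod]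
  exact Finset.prod_congr rfl fun j _ => integral_indicator (hs j)

lemma andreief {m : ℕ} (s : Fin m → Set ℝ) (hs : ∀ j, MeasurableSet (s j))
    (f : Fin m → ℝ → ℝ) (hf : ∀ i j, Integrable ((s j).indicator (f i)))
    (e : Equiv.Perm (Fin m)) :
    ∫ u in Set.pi Set.univ s, Matrix.det (Matrix.of fun i j => f i (u (e j)))
      = Matrix.det (Matrix.of fun i j => ∫ x in s (e j), f i x) := by
  have hdet : ∀ u : Fin m → ℝ, Matrix.det (Matrix.of fun i j => f i (u (e j)))
      = ∑ σ : Equiv.Perm (Fin m), ((Equiv.Perm.sign σ : ℤ) : ℝ)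
          * ∏ j, f (σ (e.symm j)) (u j) := by
    intro u
    rw [Matrix.det_apply']
    refine Finset.sum_congr rfl fun σ _ => ?_
    congr 1
    rw [← Equiv.prod_comp e (fun j => f (σ (e.symm j)) (u j))]
    exact Finset.prod_congr rfl fun i _ => by simp
  have hint : ∀ σ : Equiv.Perm (Fin m),
      IntegrableOn (fun u : Fin m → ℝ => ∏ j, f (σ (e.symm j)) (u j))
        (Set.pi Set.univ s) volume := by
    intro σ
    refine (integrable_indicator_iff (MeasurableSet.univ_pi hs)).mp ?_
    rw [indicator_pi_prod s (fun j => f (σ (e.symm j)))]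
    exact Integrable.fintype_prod (fun j => hf _ j)
  calc ∫ u in Set.pi Set.univ s, Matrix.det (Matrix.of fun i j => f i (u (e j)))
      = ∫ u in Set.pi Set.univ s, ∑ σ : Equiv.Perm (Fin m),
          ((Equiv.Perm.sign σ : ℤ) : ℝ) * ∏ j, f (σ (e.symm j)) (u j) := by
        simp_rw [hdet]
    _ = ∑ σ : Equiv.Perm (Fin m), ∫ u in Set.pi Set.univ s,
          ((Equiv.Perm.sign σ : ℤ) : ℝ) * ∏ j, f (σ (e.symm j)) (u j) :=
        integral_finset_sum _ (fun σ _ => ((hint σ).const_mul _))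
    _ = ∑ σ : Equiv.Perm (Fin m), ((Equiv.Perm.sign σ : ℤ) : ℝ)
          * ∏ j, ∫ x in s j, f (σ (e.symm j)) x := by
        refine Finset.sum_congr rfl fun σ _ => ?_
        rw [integral_const_mul, box_prod s hs]
    _ = Matrix.det (Matrix.of fun i j => ∫ x in s (e j), f i x) := by
        rw [Matrix.det_apply']
        refine Finset.sum_congr rfl fun σ _ => ?_
        congr 1
        rw [← Equiv.prod_comp e (fun j => ∫ x in s j, f (σ (e.symm j)) x)]
        exact (Finset.prod_congr rfl fun i _ => by simp).symm

-- bidiagonal column-telescoping matrix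
noncomputable def Tmat (n : ℕ) : Matrix (Fin (n+1)) (Fin (n+1)) ℝ :=
  Matrix.of fun k j => if k = j then (1:ℝ) else if (k:ℕ) + 1 = (j:ℕ) then -1 else 0

lemma Tmat_sum (n : ℕ) (R : Fin (n+1) → ℝ) (j : Fin (n+1)) :
    (∑ k, R k * Tmat n k j)
      = R j - (if h : (j:ℕ) = 0 then 0 else R ⟨(j:ℕ) - 1, by omega⟩) := by
  have hsplit : ∀ k, R k * Tmat n k j
      = (if k = j then R k else 0) + (if (k:ℕ) + 1 = (j:ℕ) then -R k else 0) := by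
    intro k
    by_cases h1 : k = j
    · have h2 : ¬ ((k:ℕ) + 1 = (j:ℕ)) := by subst h1; omega
      simp [Tmat, h1, h2]
    · by_cases h2 : (k:ℕ) + 1 = (j:ℕ)
      · simp [Tmat, h1, h2]
      · simp [Tmat, h1, h2]
  rw [Finset.sum_congr rfl fun k _ => hsplit k, Finset.sum_add_distrib]
  rw [Finset.sum_ite_eq' Finset.univ j R]
  by_cases hj : (j:ℕ) = 0
  · rw [dif_pos hj]
    have : ∀ k : Fin (n+1), ¬ ((k:ℕ) + 1 = (j:ℕ)) := fun k => by omega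
    simp [this]
  · rw [dif_neg hj]
    have hcond : ∀ k : Fin (n+1), ((k:ℕ) + 1 = (j:ℕ)) ↔ k = ⟨(j:ℕ) - 1, by omega⟩ := by
      intro k
      rw [Fin.ext_iff]
      simp only []
      omega
    have hs2 : (∑ k : Fin (n+1), if (k:ℕ) + 1 = (j:ℕ) then -R k else 0)
        = ∑ k, if k = (⟨(j:ℕ) - 1, by omega⟩ : Fin (n+1)) then -R k else 0 := by
      refine Finset.sum_congr rfl fun k _ => ?_
      rw [if_congr (hcond k) rfl rfl]
    rw [hs2, Finset.sum_ite_eq' Finset.univ _ (fun k => -R k)]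
    simp
    ring

lemma Tmat_det (n : ℕ) : (Tmat n).det = 1 := by
  rw [Matrix.det_of_upperTriangular]
  · simp [Tmat]
  · intro i j hij
    have h1 : ¬ i = j := by
      intro h; subst h; exact lt_irrefl _ hij
    have h2 : ¬ ((i:ℕ) + 1 = (j:ℕ)) := by
      have h3 : (j:ℕ) < (i:ℕ) := hij
      omega
    simp [Tmat, h1, h2]

noncomputable def Lmat (n : ℕ) : Matrix (Fin (n+1)) (Fin (n+1)) ℝ :=
  Matrix.of fun i k =>
    if (i:ℕ) + 1 < n + 1 then
      (if k = i then (2 * (i:ℕ) + 1 : ℝ) else if (k:ℕ) = (i:ℕ) + 1 then -1 else 0)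
    else (if (k:ℕ) = 0 then 1 else 0)

lemma Lmat_sum_lt (n : ℕ) (R : Fin (n+1) → ℝ) (i : Fin (n+1)) (hi : (i:ℕ) + 1 < n + 1) :
    (∑ k, Lmat n i k * R k)
      = (2 * (i:ℕ) + 1 : ℝ) * R i - R ⟨(i:ℕ) + 1, hi⟩ := by
  set i1 : Fin (n+1) := ⟨(i:ℕ) + 1, hi⟩ with hi1
  have hval : (i1 : ℕ) = (i:ℕ) + 1 := rfl
  have hsplit : ∀ k, Lmat n i k * R k
      = (if k = i then (2 * (i:ℕ) + 1 : ℝ) * R k else 0) + (if k = i1 then -R k else 0) := by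
    intro k
    have hL : Lmat n i k
        = if k = i then (2 * (i:ℕ) + 1 : ℝ) else if (k:ℕ) = (i:ℕ) + 1 then -1 else 0 := by
      simp only [Lmat, Matrix.of_apply]
      rw [if_pos hi]
    rw [hL]
    by_cases h1 : k = i
    · have h2 : ¬ k = i1 := by
        rw [Fin.ext_iff, hval]
        subst h1; omega
      rw [if_pos h1, if_pos h1, if_neg h2]
      ring
    · rw [if_neg h1, if_neg h1]
      by_cases h2 : k = i1
      · have h3 : (k:ℕ) = (i:ℕ) + 1 := by rw [h2, hval]
        rw [if_pos h3, if_pos h2, h2]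
        ring
      · have h3 : ¬ (k:ℕ) = (i:ℕ) + 1 := by
          intro h; apply h2; rw [Fin.ext_iff, hval]; exact h
        rw [if_neg h3, if_neg h2]
        ring
  rw [Finset.sum_congr rfl fun k _ => hsplit k, Finset.sum_add_distrib,
    Finset.sum_ite_eq' Finset.univ i (fun k => (2 * (i:ℕ) + 1 : ℝ) * R k),
    Finset.sum_ite_eq' Finset.univ i1 (fun k => -R k)]
  simp only [Finset.mem_univ, if_pos]
  ring

lemma Lmat_sum_last (n : ℕ) (R : Fin (n+1) → ℝ) (i : Fin (n+1)) (hi : ¬ ((i:ℕ) + 1 < n + 1)) :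
    (∑ k, Lmat n i k * R k) = R 0 := by
  have hsplit : ∀ k : Fin (n+1), Lmat n i k * R k = (if k = 0 then R k else 0) := by
    intro k
    have hL : Lmat n i k = if (k:ℕ) = 0 then 1 else 0 := by
      simp only [Lmat, Matrix.of_apply]
      rw [if_neg hi]
    rw [hL]
    have hcond : ((k:ℕ) = 0) ↔ k = 0 := by rw [Fin.ext_iff]; rfl
    by_cases h1 : k = 0
    · rw [if_pos (hcond.mpr h1), if_pos h1]; ring
    · rw [if_neg (fun h => h1 (hcond.mp h)), if_neg h1]; ring
  rw [Finset.sum_congr rfl fun k _ => hsplit k,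
    Finset.sum_ite_eq' Finset.univ (0 : Fin (n+1)) R]
  simp only [Finset.mem_univ, if_pos]

lemma Lmat_det (n : ℕ) : (Lmat n).det = 1 := by
  have hlast : ¬ ((Fin.last n : ℕ) + 1 < n + 1) := by simp
  have hminor_entry : ∀ i j : Fin n,
      ((Lmat n).submatrix (Fin.last n).succAbove (0 : Fin (n+1)).succAbove) i j
        = if (j:ℕ) = (i:ℕ) then -1 else if (j:ℕ) + 1 = (i:ℕ) then (2 * (i:ℕ) + 1 : ℝ) else 0 := by
    intro i j
    have hlt : ((i.castSucc : Fin (n+1)) : ℕ) + 1 < n + 1 := by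
      simp only [Fin.coe_castSucc]; omega
    rw [Matrix.submatrix_apply, Fin.succAbove_last, Fin.zero_succAbove]
    have hL : Lmat n i.castSucc j.succ
        = if j.succ = i.castSucc then (2 * ((i.castSucc : Fin (n+1)):ℕ) + 1 : ℝ)
          else if ((j.succ : Fin (n+1)):ℕ) = ((i.castSucc : Fin (n+1)):ℕ) + 1 then -1 else 0 := by
      simp only [Lmat, Matrix.of_apply]
      rw [if_pos hlt]
    rw [hL]
    have hc1 : (j.succ = i.castSucc) ↔ ((j:ℕ) + 1 = (i:ℕ)) := by
      rw [Fin.ext_iff]; simp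
    have hc2 : (((j.succ : Fin (n+1)):ℕ) = ((i.castSucc : Fin (n+1)):ℕ) + 1) ↔ ((j:ℕ) = (i:ℕ)) := by
      simp
    by_cases h1 : (j:ℕ) = (i:ℕ)
    · have : ¬ ((j:ℕ) + 1 = (i:ℕ)) := by omega
      rw [if_neg (fun h => this (hc1.mp h)), if_pos (hc2.mpr h1), if_pos h1]
    · by_cases h2 : (j:ℕ) + 1 = (i:ℕ)
      · rw [if_pos (hc1.mpr h2), if_neg h1, if_pos h2]
        simp
      · rw [if_neg (fun h => h2 (hc1.mp h)), if_neg (fun h => h1 (hc2.mp h)),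
          if_neg h1, if_neg h2]
  rw [Matrix.det_succ_row (Lmat n) (Fin.last n), Finset.sum_eq_single (0 : Fin (n+1))]
  · have h00 : Lmat n (Fin.last n) 0 = 1 := by
      simp only [Lmat, Matrix.of_apply]
      rw [if_neg hlast, if_pos (by simp)]
    rw [h00]
    have htri : ((Lmat n).submatrix (Fin.last n).succAbove
        (0 : Fin (n+1)).succAbove).BlockTriangular OrderDual.toDual := by
      intro i j hij
      have hij' : (i:ℕ) < (j:ℕ) := hij
      rw [hminor_entry i j, if_neg (by omega), if_neg (by omega)]
    rw [Matrix.det_of_lowerTriangular _ htri]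
    have hdiag : ∀ i : Fin n, ((Lmat n).submatrix (Fin.last n).succAbove
        (0 : Fin (n+1)).succAbove) i i = -1 := by
      intro i
      rw [hminor_entry i i, if_pos rfl]
    rw [Finset.prod_congr rfl fun i _ => hdiag i, Finset.prod_const]
    simp only [Finset.card_univ, Fintype.card_fin, Fin.val_last, Fin.val_zero, Nat.add_zero,
      mul_one]
    rw [← pow_add, ← two_mul, pow_mul]
    norm_num
  · intro j _ hj
    have hj0 : ¬ ((j:ℕ) = 0) := by
      intro h; exact hj (by rw [Fin.ext_iff]; simpa using h)
    have hL : Lmat n (Fin.last n) j = 0 := by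
      simp only [Lmat, Matrix.of_apply]
      rw [if_neg hlast, if_neg hj0]
    rw [hL]
    ring
  · intro h; exact absurd (Finset.mem_univ _) h

end GaussAux

/-- Gauss case, even order `n = 2m`, integrating out the even-indexed
singular values over the interlacing box `s_k ∈ (t_{k+1}, t_k)`, `s_m ∈ (0, t_m)`,
gives an `m×m` determinant with columns indexed by `τ_j = t_{m+1-j}`, rows
`e^{-τ²/2} τ^{2i-1}` and a final row of incomplete Gaussian integrals `∫_0^τ e^{-ξ²/2} dξ`. -/
theorem gauss_even_integrate_even (m : ℕ) (hm : 1 ≤ m) (t : ℕ → ℝ)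
    (hdec : ∀ i, 1 ≤ i → i < m → t (i + 1) ≤ t i) (htm : 0 ≤ t m) :
    (∫ u in {u : Fin m → ℝ | ∀ i : Fin m,
        (if (i : ℕ) + 1 < m then t ((i : ℕ) + 2) else 0) < u i ∧ u i < t ((i : ℕ) + 1)},
      (∏ k : Fin m, Real.exp (-(u k) ^ 2 / 2)) *
        ∏ k : Fin m, ∏ j ∈ Finset.Iio k, ((u j) ^ 2 - (u k) ^ 2)) =
    Matrix.det (Matrix.of fun i j : Fin m =>
      if (i : ℕ) + 1 < m then
        Real.exp (-(t (m - (j : ℕ))) ^ 2 / 2) * (t (m - (j : ℕ))) ^ (2 * (i : ℕ) + 1)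
      else ∫ ξ in (0 : ℝ)..(t (m - (j : ℕ))), Real.exp (-ξ ^ 2 / 2)) := by
  obtain ⟨n, rfl⟩ : ∃ n, m = n + 1 := ⟨m - 1, by omega⟩
  set s : Fin (n+1) → Set ℝ := fun i =>
    Set.Ioo (if (i:ℕ) + 1 < n + 1 then t ((i:ℕ) + 2) else 0) (t ((i:ℕ) + 1)) with hs_def
  have hs : ∀ j, MeasurableSet (s j) := fun j => measurableSet_Ioo
  have hset : {u : Fin (n+1) → ℝ | ∀ i : Fin (n+1),
        (if (i:ℕ) + 1 < n + 1 then t ((i:ℕ) + 2) else 0) < u i ∧ u i < t ((i:ℕ) + 1)}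
      = Set.pi Set.univ s := by
    ext u
    simp only [Set.mem_setOf_eq, Set.mem_pi, Set.mem_univ, forall_true_left, hs_def,
      Set.mem_Ioo]
  have hpoint : ∀ u : Fin (n+1) → ℝ,
      ((∏ k : Fin (n+1), Real.exp (-(u k) ^ 2 / 2)) *
        ∏ k : Fin (n+1), ∏ j ∈ Finset.Iio k, ((u j) ^ 2 - (u k) ^ 2))
      = Matrix.det (Matrix.of fun i j : Fin (n+1) =>
          (fun i : Fin (n+1) => gaussMom (i:ℕ)) i (u (Fin.revPerm j))) := by
    intro u
    have h1 : (Matrix.of fun i j : Fin (n+1) =>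
          (fun i : Fin (n+1) => gaussMom (i:ℕ)) i (u (Fin.revPerm j))) =
        Matrix.of (fun i j => (fun j : Fin (n+1) => Real.exp (-(u (Fin.rev j)) ^ 2 / 2)) j *
          (Matrix.transpose (Matrix.vandermonde (fun j : Fin (n+1) => (u (Fin.rev j)) ^ 2))) i j) := by
      ext i j
      simp [gaussMom, Matrix.vandermonde_apply, pow_mul]
    rw [h1, Matrix.det_mul_row (fun j : Fin (n+1) => Real.exp (-(u (Fin.rev j)) ^ 2 / 2))
      (Matrix.transpose (Matrix.vandermonde (fun j : Fin (n+1) => (u (Fin.rev j)) ^ 2))),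
      Matrix.det_transpose, Matrix.det_vandermonde]
    congr 1
    · exact (Equiv.prod_comp Fin.revPerm (fun k => Real.exp (-(u k) ^ 2 / 2))).symm
    · rw [← Equiv.prod_comp Fin.revPerm
        (fun k : Fin (n+1) => ∏ j ∈ Finset.Iio k, ((u j) ^ 2 - (u k) ^ 2))]
      refine Finset.prod_congr rfl fun i _ => ?_
      refine Finset.prod_nbij' Fin.rev Fin.rev ?_ ?_ ?_ ?_ ?_
      · intro a ha
        simp only [Fin.revPerm_apply, Finset.mem_Iio] at ha
        rw [Finset.mem_Ioi]
        have h2 := Fin.rev_lt_rev.mpr ha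
        rwa [Fin.rev_rev] at h2
      · intro a ha
        rw [Finset.mem_Ioi] at ha
        simp only [Fin.revPerm_apply, Finset.mem_Iio]
        exact Fin.rev_lt_rev.mpr ha
      · intro a _; exact Fin.rev_rev a
      · intro a _; exact Fin.rev_rev a
      · intro a _
        simp only [Fin.revPerm_apply, Fin.rev_rev]
  have hf : ∀ i j : Fin (n+1),
      Integrable ((s j).indicator ((fun i : Fin (n+1) => gaussMom (i:ℕ)) i)) := by
    intro i j
    rw [integrable_indicator_iff (hs j)]
    exact ((gaussMom_continuous (i:ℕ)).integrableOn_Icc).mono_set Set.Ioo_subset_Icc_self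
  rw [hset]
  simp_rw [hpoint]
  rw [andreief s hs (fun i : Fin (n+1) => gaussMom (i:ℕ)) hf Fin.revPerm]
  -- now matrix algebra
  set Dmat : Matrix (Fin (n+1)) (Fin (n+1)) ℝ :=
    Matrix.of fun i j => gaussG (i:ℕ) (t (n + 1 - (j:ℕ))) with hD_def
  have hC : (Matrix.of fun i j : Fin (n+1) =>
        ∫ x in s (Fin.revPerm j), (fun i : Fin (n+1) => gaussMom (i:ℕ)) i x)
      = Dmat * Tmat n := by
    ext i j
    rw [Matrix.mul_apply]
    rw [Tmat_sum n (fun k => Dmat i k) j]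
    simp only [Matrix.of_apply]
    show (∫ x in s (Fin.revPerm j), gaussMom (i:ℕ) x) = _
    have hrev : ((Fin.revPerm j : Fin (n+1)) : ℕ) = n - (j:ℕ) := by
      simp only [Fin.revPerm_apply, Fin.val_rev]
      omega
    have hj : (j:ℕ) < n + 1 := j.isLt
    by_cases hj0 : (j:ℕ) = 0
    · have hcond : ¬ (((Fin.revPerm j : Fin (n+1)) : ℕ) + 1 < n + 1) := by omega
      have hsval : s (Fin.revPerm j) = Set.Ioo 0 (t (n + 1)) := by
        rw [hs_def]
        simp only []
        rw [if_neg hcond]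
        have : ((Fin.revPerm j : Fin (n+1)) : ℕ) + 1 = n + 1 := by omega
        rw [this]
      rw [hsval, integral_Ioo_gaussMom _ htm, gaussG_zero]
      rw [dif_pos hj0]
      have : n + 1 - (j:ℕ) = n + 1 := by omega
      simp only [hD_def, Matrix.of_apply, this]
    · have hcond : (((Fin.revPerm j : Fin (n+1)) : ℕ) + 1 < n + 1) := by omega
      have hsval : s (Fin.revPerm j)
          = Set.Ioo (t (n - (j:ℕ) + 2)) (t (n - (j:ℕ) + 1)) := by
        rw [hs_def]
        simp only []
        rw [if_pos hcond, hrev]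
      have hle : t (n - (j:ℕ) + 2) ≤ t (n - (j:ℕ) + 1) :=
        hdec (n - (j:ℕ) + 1) (by omega) (by omega)
      rw [hsval, integral_Ioo_gaussMom _ hle]
      rw [dif_neg hj0]
      simp only [hD_def, Matrix.of_apply]
      have e1 : n + 1 - (j:ℕ) = n - (j:ℕ) + 1 := by omega
      have e2 : n + 1 - ((⟨(j:ℕ) - 1, by omega⟩ : Fin (n+1)) : ℕ) = n - (j:ℕ) + 2 := by
        simp only []
        omega
      rw [e1, e2]
  rw [hC, Matrix.det_mul, Tmat_det, mul_one]
  have hN : (Matrix.of fun i j : Fin (n+1) =>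
      if (i : ℕ) + 1 < n + 1 then
        Real.exp (-(t (n + 1 - (j : ℕ))) ^ 2 / 2) * (t (n + 1 - (j : ℕ))) ^ (2 * (i : ℕ) + 1)
      else ∫ ξ in (0 : ℝ)..(t (n + 1 - (j : ℕ))), Real.exp (-ξ ^ 2 / 2))
      = Lmat n * Dmat := by
    ext i j
    rw [Matrix.mul_apply, Matrix.of_apply]
    by_cases hi : (i:ℕ) + 1 < n + 1
    · rw [Lmat_sum_lt n (fun k => Dmat k j) i hi, if_pos hi]
      simp only [hD_def, Matrix.of_apply]
      exact gaussG_succ (i:ℕ) (t (n + 1 - (j:ℕ)))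
    · rw [Lmat_sum_last n (fun k => Dmat k j) i hi, if_neg hi]
      simp only [hD_def, Matrix.of_apply, Fin.val_zero]
      unfold gaussG gaussMom
      simp
  rw [hN, Matrix.det_mul, Lmat_det, one_mul]
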